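/- Let d ≥ 1, let Q be an invertible real d×d matrix, let M satisfy the commutation condition Mᵀ(QᵀQ)⁻¹ = (QᵀQ)⁻¹M, and let v, w be symmetric real d×d matrices. Let R be a symmetric d×d matrix with R·R = v̄, and suppose that R·cosh(Rt) + w̄·sinh(Rt) is invertible for every t ∈ [0,T]. Define ψ(t) := (QᵀQ)⁻¹M/2 − Q⁻¹·R·k(t)·(Qᵀ)⁻¹/2. Then ψ(0) = w and, for every t ∈ [0,T], ψ is differentiable at t with ψ′(t) = ψ(t)M + Mᵀψ(t) − 2ψ(t)QᵀQψ(t) + v. -/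

import Mathlib

open Matrix NormedSpace

attribute [local instance] Matrix.linftyOpNormedRing Matrix.linftyOpNormedAlgebra

/-- `cosh` of a square matrix. -/
noncomputable def mcosh {d : ℕ} (X : Matrix (Fin d) (Fin d) ℝ) : Matrix (Fin d) (Fin d) ℝ :=
  (2:ℝ)⁻¹ • (exp X + exp (-X))

/-- `sinh` of a square matrix. -/
noncomputable def msinh {d : ℕ} (X : Matrix (Fin d) (Fin d) ℝ) : Matrix (Fin d) (Fin d) ℝ :=
  (2:ℝ)⁻¹ • (exp X - exp (-X))

private lemma mcosh_zero {d : ℕ} : mcosh (0 : Matrix (Fin d) (Fin d) ℝ) = 1 := by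
  rw [mcosh, neg_zero, exp_zero, ← two_smul ℝ (1 : Matrix (Fin d) (Fin d) ℝ), smul_smul]
  norm_num

private lemma msinh_zero {d : ℕ} : msinh (0 : Matrix (Fin d) (Fin d) ℝ) = 0 := by
  rw [msinh, neg_zero, exp_zero, sub_self, smul_zero]

private lemma hasDerivAt_matrix_inv {d : ℕ} {A : ℝ → Matrix (Fin d) (Fin d) ℝ}
    {A' : Matrix (Fin d) (Fin d) ℝ} {t : ℝ} (h : HasDerivAt A A' t) (hu : IsUnit (A t)) :
    HasDerivAt (fun s => (A s)⁻¹) (-((A t)⁻¹ * A' * (A t)⁻¹)) t := by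
  have hf := hasFDerivAt_ringInverse (𝕜 := ℝ) hu.unit
  rw [hu.unit_spec] at hf
  have h2 := hf.comp_hasDerivAt t h
  simp only [ContinuousLinearMap.neg_apply, ContinuousLinearMap.mulLeftRight_apply] at h2
  have hcoe : (↑hu.unit⁻¹ : Matrix (Fin d) (Fin d) ℝ) = (A t)⁻¹ := by
    rw [Matrix.coe_units_inv, hu.unit_spec]
  rw [hcoe] at h2
  simp only [Function.comp_def, Matrix.nonsing_inv_eq_ringInverse, mul_assoc] at h2 ⊢
  exact h2

private lemma hasDerivAt_mexp_neg {d : ℕ} (R : Matrix (Fin d) (Fin d) ℝ) (t : ℝ) :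
    HasDerivAt (fun s : ℝ => exp (-(s • R))) (exp (-(t • R)) * (-R)) t := by
  have h1 : (fun s : ℝ => exp (-(s • R))) = fun s : ℝ => exp (s • (-R)) := by
    funext s; rw [smul_neg]
  have h2 := hasDerivAt_exp_smul_const (-R) t
  rw [h1, ← smul_neg]
  exact h2

private lemma hasDerivAt_mcosh {d : ℕ} (R : Matrix (Fin d) (Fin d) ℝ) (t : ℝ) :
    HasDerivAt (fun s : ℝ => mcosh (s • R)) (msinh (t • R) * R) t := by
  have hE : HasDerivAt (fun s : ℝ => exp (s • R)) (exp (t • R) * R) t :=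
    hasDerivAt_exp_smul_const R t
  have := ((hE.add (hasDerivAt_mexp_neg R t)).const_smul ((2:ℝ)⁻¹))
  have e : msinh (t • R) * R = (2:ℝ)⁻¹ • (exp (t • R) * R + exp (-(t • R)) * (-R)) := by
    rw [msinh, smul_mul_assoc, sub_mul, mul_neg, ← sub_eq_add_neg]
  rw [e]
  exact this

private lemma hasDerivAt_msinh {d : ℕ} (R : Matrix (Fin d) (Fin d) ℝ) (t : ℝ) :
    HasDerivAt (fun s : ℝ => msinh (s • R)) (mcosh (t • R) * R) t := by
  have hE : HasDerivAt (fun s : ℝ => exp (s • R)) (exp (t • R) * R) t :=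
    hasDerivAt_exp_smul_const R t
  have := ((hE.sub (hasDerivAt_mexp_neg R t)).const_smul ((2:ℝ)⁻¹))
  have e : mcosh (t • R) * R = (2:ℝ)⁻¹ • (exp (t • R) * R - exp (-(t • R)) * (-R)) := by
    rw [mcosh, smul_mul_assoc, add_mul, mul_neg, sub_neg_eq_add]
  rw [e]
  exact this

private lemma key_ring {A : Type*} [Ring A] (u X P Mt M : A)
    (h1 : u * P = Mt) (h2 : P * u = M) (h3 : u * M = Mt * u) :
    (u - X) * M + Mt * (u - X) - (u - X) * P * (u - X) = Mt * u - X * P * X := by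
  have e : (u - X) * P * (u - X) = Mt * u - Mt * X - X * M + X * P * X := by
    rw [← h1, ← h2]; noncomm_ring
  have e2 : (u - X) * M + Mt * (u - X) = u * M + Mt * u - X * M - Mt * X := by noncomm_ring
  rw [e, e2, h3]
  abel

private lemma k_deriv_val {A : Type*} [Ring A] (a ai b R : A) (hai : ai * a = 1) :
    -(-(ai * (b * R) * ai) * b + ai * (a * R)) = -(ai * b) * R * -(ai * b) - R := by
  have e1 : ai * (a * R) = R := by rw [← mul_assoc, hai, one_mul]
  rw [e1]
  noncomm_ring

theorem stmt_0 (d : ℕ) (hd : 1 ≤ d) (T : ℝ) (hT : 0 < T)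
    (Q M v w R : Matrix (Fin d) (Fin d) ℝ)
    (hQ : IsUnit Q)
    (hM : Mᵀ * (Qᵀ * Q)⁻¹ = (Qᵀ * Q)⁻¹ * M)
    (hv : v.IsSymm) (hw : w.IsSymm) (hR : R.IsSymm)
    (vbar wbar : Matrix (Fin d) (Fin d) ℝ)
    (hvbar : vbar = Q * ((2:ℝ) • v + Mᵀ * (Qᵀ * Q)⁻¹ * M) * Qᵀ)
    (hwbar : wbar = Q * ((2:ℝ) • w - (Qᵀ * Q)⁻¹ * M) * Qᵀ)
    (hRR : R * R = vbar)
    (hinv : ∀ t ∈ Set.Icc (0:ℝ) T, IsUnit (R * mcosh (t • R) + wbar * msinh (t • R)))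
    (k ψ : ℝ → Matrix (Fin d) (Fin d) ℝ)
    (hk : ∀ t, k t = -((R * mcosh (t • R) + wbar * msinh (t • R))⁻¹ *
      (R * msinh (t • R) + wbar * mcosh (t • R))))
    (hψ : ∀ t, ψ t = (2:ℝ)⁻¹ • ((Qᵀ * Q)⁻¹ * M) - (2:ℝ)⁻¹ • (Q⁻¹ * R * k t * Qᵀ⁻¹)) :
    ψ 0 = w ∧ ∀ t ∈ Set.Icc (0:ℝ) T,
      HasDerivAt ψ (ψ t * M + Mᵀ * ψ t - (2:ℝ) • (ψ t * (Qᵀ * Q) * ψ t) + v) t := by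
  -- basic invertibility facts
  have hQdet : IsUnit Q.det := (Matrix.isUnit_iff_isUnit_det Q).1 hQ
  have hQtdet : IsUnit Qᵀ.det := by rwa [Matrix.det_transpose]
  have hQt : IsUnit Qᵀ := (Matrix.isUnit_iff_isUnit_det Qᵀ).2 hQtdet
  have hP : IsUnit (Qᵀ * Q) := hQt.mul hQ
  have hPdet : IsUnit (Qᵀ * Q).det := (Matrix.isUnit_iff_isUnit_det _).1 hP
  have hQr : Q * Q⁻¹ = 1 := Matrix.mul_nonsing_inv Q hQdet
  have hQl : Q⁻¹ * Q = 1 := Matrix.nonsing_inv_mul Q hQdet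
  have hQtl : Qᵀ⁻¹ * Qᵀ = 1 := Matrix.nonsing_inv_mul Qᵀ hQtdet
  have hQtr : Qᵀ * Qᵀ⁻¹ = 1 := Matrix.mul_nonsing_inv Qᵀ hQtdet
  have hNP : (Qᵀ * Q)⁻¹ * (Qᵀ * Q) = 1 := Matrix.nonsing_inv_mul _ hPdet
  have hPN : (Qᵀ * Q) * (Qᵀ * Q)⁻¹ = 1 := Matrix.mul_nonsing_inv _ hPdet
  have c1 : ∀ Z : Matrix (Fin d) (Fin d) ℝ, Qᵀ⁻¹ * (Qᵀ * Z) = Z := fun Z => by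
    rw [← mul_assoc, hQtl, one_mul]
  have c2 : ∀ Z : Matrix (Fin d) (Fin d) ℝ, Q * (Q⁻¹ * Z) = Z := fun Z => by
    rw [← mul_assoc, hQr, one_mul]
  have c3 : ∀ Z : Matrix (Fin d) (Fin d) ℝ, Q⁻¹ * (Q * Z) = Z := fun Z => by
    rw [← mul_assoc, hQl, one_mul]
  -- algebraic facts about u := (Qᵀ * Q)⁻¹ * M
  have hup : ((Qᵀ * Q)⁻¹ * M) * (Qᵀ * Q) = Mᵀ := by
    rw [← hM, mul_assoc, hNP, mul_one]
  have hpu : (Qᵀ * Q) * ((Qᵀ * Q)⁻¹ * M) = M := by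
    rw [← mul_assoc, hPN, one_mul]
  have hum : ((Qᵀ * Q)⁻¹ * M) * M = Mᵀ * ((Qᵀ * Q)⁻¹ * M) := by
    rw [← mul_assoc, hM]
  constructor
  · -- ψ 0 = w
    have hA0 : R * mcosh ((0:ℝ) • R) + wbar * msinh ((0:ℝ) • R) = R := by
      simp only [zero_smul, mcosh_zero, msinh_zero, mul_one, mul_zero, add_zero]
    have hRunit : IsUnit R := by
      have := hinv 0 ⟨le_refl 0, hT.le⟩
      rwa [hA0] at this
    have hRdet : IsUnit R.det := (Matrix.isUnit_iff_isUnit_det R).1 hRunit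
    have cR : ∀ Z : Matrix (Fin d) (Fin d) ℝ, R * (R⁻¹ * Z) = Z := fun Z => by
      rw [← mul_assoc, Matrix.mul_nonsing_inv R hRdet, one_mul]
    have hk0 : k 0 = -(R⁻¹ * wbar) := by
      rw [hk]
      simp only [zero_smul, mcosh_zero, msinh_zero, mul_one, mul_zero, add_zero, zero_add]
    have hmid : Q⁻¹ * R * k 0 * Qᵀ⁻¹ = -((2:ℝ) • w - (Qᵀ * Q)⁻¹ * M) := by
      rw [hk0, hwbar]
      simp only [mul_neg, neg_mul, neg_inj]
      simp only [mul_assoc, cR, c3, hQtr, mul_one]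
    rw [hψ, hmid]
    module
  · intro t ht
    have hAunit : IsUnit (R * mcosh (t • R) + wbar * msinh (t • R)) := hinv t ht
    have hAdet : IsUnit (R * mcosh (t • R) + wbar * msinh (t • R)).det :=
      (Matrix.isUnit_iff_isUnit_det _).1 hAunit
    have hAA : (R * mcosh (t • R) + wbar * msinh (t • R))⁻¹ *
        (R * mcosh (t • R) + wbar * msinh (t • R)) = 1 := Matrix.nonsing_inv_mul _ hAdet
    -- derivatives of A and B
    have hA' : HasDerivAt (fun s => R * mcosh (s • R) + wbar * msinh (s • R))
        ((R * msinh (t • R) + wbar * mcosh (t • R)) * R) t := by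
      have := ((hasDerivAt_mcosh R t).const_mul R).add ((hasDerivAt_msinh R t).const_mul wbar)
      rw [add_mul, mul_assoc, mul_assoc]
      exact this
    have hB' : HasDerivAt (fun s => R * msinh (s • R) + wbar * mcosh (s • R))
        ((R * mcosh (t • R) + wbar * msinh (t • R)) * R) t := by
      have := ((hasDerivAt_msinh R t).const_mul R).add ((hasDerivAt_mcosh R t).const_mul wbar)
      rw [add_mul, mul_assoc, mul_assoc]
      exact this
    have hAinv : HasDerivAt (fun s => (R * mcosh (s • R) + wbar * msinh (s • R))⁻¹)
        (-((R * mcosh (t • R) + wbar * msinh (t • R))⁻¹ *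
          ((R * msinh (t • R) + wbar * mcosh (t • R)) * R) *
          (R * mcosh (t • R) + wbar * msinh (t • R))⁻¹)) t :=
      hasDerivAt_matrix_inv hA' hAunit
    -- derivative of k
    have hkd := (hAinv.mul hB').neg
    rw [k_deriv_val (R * mcosh (t • R) + wbar * msinh (t • R))
      ((R * mcosh (t • R) + wbar * msinh (t • R))⁻¹)
      (R * msinh (t • R) + wbar * mcosh (t • R)) R hAA] at hkd
    have hk' : HasDerivAt k (k t * R * k t - R) t := by
      rw [hk t, funext hk]
      exact hkd
    -- the derivative of ψ
    have hψ' : HasDerivAt ψ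
        (-((2:ℝ)⁻¹ • (Q⁻¹ * R * (k t * R * k t - R) * Qᵀ⁻¹))) t := by
      rw [funext hψ]
      have hin : HasDerivAt (fun s => Q⁻¹ * R * k s * Qᵀ⁻¹)
          (Q⁻¹ * R * (k t * R * k t - R) * Qᵀ⁻¹) t :=
        (hk'.const_mul (Q⁻¹ * R)).mul_const Qᵀ⁻¹
      have := (hasDerivAt_const t ((2:ℝ)⁻¹ • ((Qᵀ * Q)⁻¹ * M))).sub
        (hin.const_smul ((2:ℝ)⁻¹))
      simp at this
      exact this
    -- identify the derivative value
    have hψt : ψ t = (2:ℝ)⁻¹ • ((Qᵀ * Q)⁻¹ * M - Q⁻¹ * R * k t * Qᵀ⁻¹) := by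
      rw [hψ, smul_sub]
    have hXPX : (Q⁻¹ * R * k t * Qᵀ⁻¹) * (Qᵀ * Q) * (Q⁻¹ * R * k t * Qᵀ⁻¹)
        = Q⁻¹ * R * (k t * R * k t) * Qᵀ⁻¹ := by
      simp only [mul_assoc, c1, c2]
    have hRRX : Q⁻¹ * R * R * Qᵀ⁻¹ = (2:ℝ) • v + Mᵀ * ((Qᵀ * Q)⁻¹ * M) := by
      rw [mul_assoc Q⁻¹ R R, hRR, hvbar, ← mul_assoc Mᵀ]
      rw [mul_assoc Q, c3, mul_assoc, hQtr, mul_one]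
    have hW : Q⁻¹ * R * (k t * R * k t - R) * Qᵀ⁻¹
        = (Q⁻¹ * R * k t * Qᵀ⁻¹) * (Qᵀ * Q) * (Q⁻¹ * R * k t * Qᵀ⁻¹)
          - ((2:ℝ) • v + Mᵀ * ((Qᵀ * Q)⁻¹ * M)) := by
      rw [mul_sub, sub_mul, ← hXPX, hRRX]
    have hkey := key_ring ((Qᵀ * Q)⁻¹ * M) (Q⁻¹ * R * k t * Qᵀ⁻¹) (Qᵀ * Q) Mᵀ M hup hpu hum
    have hfinal : ψ t * M + Mᵀ * ψ t - (2:ℝ) • (ψ t * (Qᵀ * Q) * ψ t) + v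
        = -((2:ℝ)⁻¹ • (Q⁻¹ * R * (k t * R * k t - R) * Qᵀ⁻¹)) := by
      rw [hW]
      have h1 : ψ t * M
          = (2:ℝ)⁻¹ • (((Qᵀ * Q)⁻¹ * M - Q⁻¹ * R * k t * Qᵀ⁻¹) * M) := by
        rw [hψt, smul_mul_assoc]
      have h2 : Mᵀ * ψ t
          = (2:ℝ)⁻¹ • (Mᵀ * ((Qᵀ * Q)⁻¹ * M - Q⁻¹ * R * k t * Qᵀ⁻¹)) := by
        rw [hψt, mul_smul_comm]
      have h3 : ψ t * (Qᵀ * Q) * ψ t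
          = ((2:ℝ)⁻¹ * (2:ℝ)⁻¹) • (((Qᵀ * Q)⁻¹ * M - Q⁻¹ * R * k t * Qᵀ⁻¹) * (Qᵀ * Q) *
            ((Qᵀ * Q)⁻¹ * M - Q⁻¹ * R * k t * Qᵀ⁻¹)) := by
        rw [hψt, smul_mul_assoc, smul_mul_assoc, mul_smul_comm, smul_smul]
      rw [h1, h2, h3]
      calc (2:ℝ)⁻¹ • (((Qᵀ * Q)⁻¹ * M - Q⁻¹ * R * k t * Qᵀ⁻¹) * M)
            + (2:ℝ)⁻¹ • (Mᵀ * ((Qᵀ * Q)⁻¹ * M - Q⁻¹ * R * k t * Qᵀ⁻¹))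
            - (2:ℝ) • (((2:ℝ)⁻¹ * (2:ℝ)⁻¹) • (((Qᵀ * Q)⁻¹ * M - Q⁻¹ * R * k t * Qᵀ⁻¹) *
              (Qᵀ * Q) * ((Qᵀ * Q)⁻¹ * M - Q⁻¹ * R * k t * Qᵀ⁻¹))) + v
          = (2:ℝ)⁻¹ • (((Qᵀ * Q)⁻¹ * M - Q⁻¹ * R * k t * Qᵀ⁻¹) * M
              + Mᵀ * ((Qᵀ * Q)⁻¹ * M - Q⁻¹ * R * k t * Qᵀ⁻¹)
              - ((Qᵀ * Q)⁻¹ * M - Q⁻¹ * R * k t * Qᵀ⁻¹) * (Qᵀ * Q) *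
                ((Qᵀ * Q)⁻¹ * M - Q⁻¹ * R * k t * Qᵀ⁻¹)) + v := by
            module
        _ = (2:ℝ)⁻¹ • (Mᵀ * ((Qᵀ * Q)⁻¹ * M)
              - (Q⁻¹ * R * k t * Qᵀ⁻¹) * (Qᵀ * Q) * (Q⁻¹ * R * k t * Qᵀ⁻¹)) + v := by
            rw [hkey]
        _ = -((2:ℝ)⁻¹ • ((Q⁻¹ * R * k t * Qᵀ⁻¹) * (Qᵀ * Q) * (Q⁻¹ * R * k t * Qᵀ⁻¹)
              - ((2:ℝ) • v + Mᵀ * ((Qᵀ * Q)⁻¹ * M)))) := by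
            module
    rw [hfinal]
    exact hψ'
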